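/- Let V be a complex vector space, U, W linear endomorphisms with W² = id and (U∘W)² = μ·(U∘W) + 2μ²·id, μ ≠ 0. Suppose f ≠ 0, U(f) = c·f, and c² ≠ 2μ². Set α = c·μ/(2μ² − c²) and H = W(f) + α·f. Then U(H) = (2μ²/c)·H. -/

import Mathlib

theorem niwa_relation_eigenvector (V : Type*) [AddCommGroup V] [Module ℂ V]
    (U W : V →ₗ[ℂ] V) (hW : W ∘ₗ W = LinearMap.id) (μ : ℂ) (hμ : μ ≠ 0)
    (hrel : (U ∘ₗ W) ∘ₗ (U ∘ₗ W) = μ • (U ∘ₗ W) + (2 * μ ^ 2) • LinearMap.id)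
    (f : V) (hf : f ≠ 0) (c : ℂ) (hc : U f = c • f) (hc2 : c ^ 2 ≠ 2 * μ ^ 2) :
    U (W f + (c * μ / (2 * μ ^ 2 - c ^ 2)) • f) =
      (2 * μ ^ 2 / c) • (W f + (c * μ / (2 * μ ^ 2 - c ^ 2)) • f) := by
  have hWW : ∀ v : V, W (W v) = v := by
    intro v
    have := LinearMap.ext_iff.mp hW v
    simpa using this
  have h2μ : (2 * μ ^ 2 : ℂ) ≠ 0 := mul_ne_zero two_ne_zero (pow_ne_zero _ hμ)
  have h1 := LinearMap.ext_iff.mp hrel (W f)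
  simp only [LinearMap.comp_apply, LinearMap.add_apply, LinearMap.smul_apply,
    LinearMap.id_apply, hWW, hc, map_smul] at h1
  -- h1 : c • U (W f) = μ • c • f + (2 * μ ^ 2) • W f
  have hcne : c ≠ 0 := by
    intro hc0
    rw [hc0] at h1
    simp only [zero_smul, smul_zero, zero_add] at h1
    have hWf : W f = 0 := (smul_eq_zero.mp h1.symm).resolve_left h2μ
    have : f = 0 := by rw [← hWW f, hWf, map_zero]
    exact hf this
  have hUWf : U (W f) = μ • f + (2 * μ ^ 2 / c) • W f := by
    apply smul_right_injective V hcne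
    show c • U (W f) = c • (μ • f + (2 * μ ^ 2 / c) • W f)
    rw [h1]
    match_scalars <;> field_simp <;> ring
  have hd : 2 * μ ^ 2 - c ^ 2 ≠ 0 := fun h => hc2 (by linear_combination -h)
  rw [map_add, map_smul, hc, hUWf]
  match_scalars <;> field_simp <;> ring_nf <;> field_simp [show -c ^ 2 + μ ^ 2 * 2 ≠ 0 from fun h => hd (by linear_combination h)] <;> ring
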